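/- Let μ > 0 and let f : (0,1) → ℝ be such that f_μ = f/ln_μ is twice continuously differentiable on (0,1). Then for every x ∈ (0,1) the differential operator 𝒟(f)(x) := ln_μ(x)[ f_μ'(x)(1/2 + (x−x²)/(2(1+μ)) − x) + f_μ''(x)(x−x²)/2 ] can be written in the divergence form 𝒟(f)(x) = (1/w₂(x)) · d/dx [ (1/w₁(x)) · d/dx ( f(x)/w₀(x) ) ], where w₀(x) := ln_μ(x), w₁(x) := e^{−x/(1+μ)}/(x − x²), and w₂(x) := (2/ln_μ(x)) e^{x/(1+μ)}. -/

import Mathlib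

open MeasureTheory Filter Set

/-- The logarithmic weight `ln_μ(x) = ln(1+μ+x)`. -/
noncomputable def lnMu (μ x : ℝ) : ℝ := Real.log (1 + μ + x)

/-- The function `a_{n+1}(x)` from the paper. -/
noncomputable def aFun (μ : ℝ) (n : ℕ) (x : ℝ) : ℝ :=
  Real.log (1 + x / (((n : ℝ) + 1) * (1 + μ))) /
    Real.log (1 + 1 / (((n : ℝ) + 1) * (1 + μ)))

/-- Bernstein basis polynomial `p_{n,k}(x) = C(n,k) x^k (1-x)^{n-k}`. -/
noncomputable def bern (n k : ℕ) (x : ℝ) : ℝ :=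
  (n.choose k : ℝ) * x ^ k * (1 - x) ^ (n - k)

/-- The Kantorovich logarithmic operator `𝓛ₙᴷ(f,x)`. -/
noncomputable def LK (μ : ℝ) (n : ℕ) (f : ℝ → ℝ) (x : ℝ) : ℝ :=
  lnMu μ x * ∑ k ∈ Finset.range (n + 1),
    bern n k (aFun μ n x) * ((n : ℝ) + 1) *
      ∫ t in ((k : ℝ) / ((n : ℝ) + 1))..(((k : ℝ) + 1) / ((n : ℝ) + 1)), f t / lnMu μ t

/-- `γ_n := max_{x ∈ [0,1]} |a_{n+1}(x) - x|`. -/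
noncomputable def gammaN (μ : ℝ) (n : ℕ) : ℝ :=
  ⨆ x : Set.Icc (0 : ℝ) 1, |aFun μ n (x : ℝ) - (x : ℝ)|

/-- Unweighted L^p norm `(∫₀¹ |f|^p)^(1/p)` on [0,1]. -/
noncomputable def normP (p : ℝ) (f : ℝ → ℝ) : ℝ :=
  (∫ x in (0:ℝ)..1, |f x| ^ p) ^ (1 / p)

/-- Weighted L^p norm `(∫₀¹ |f/ln_μ|^p)^(1/p)` on [0,1]. -/
noncomputable def normPMu (μ p : ℝ) (f : ℝ → ℝ) : ℝ :=
  (∫ x in (0:ℝ)..1, |f x / lnMu μ x| ^ p) ^ (1 / p)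

/-- The weights `w₀, w₁, w₂` of the divergence form. -/
noncomputable def w0 (μ x : ℝ) : ℝ := lnMu μ x
noncomputable def w1 (μ x : ℝ) : ℝ := Real.exp (-x / (1 + μ)) / (x - x ^ 2)
noncomputable def w2 (μ x : ℝ) : ℝ := (2 / lnMu μ x) * Real.exp (x / (1 + μ))

theorem stmt12 (μ : ℝ) (hμ : 0 < μ) (f : ℝ → ℝ)
    (hf : ContDiffOn ℝ 2 (fun t => f t / lnMu μ t) (Set.Ioo 0 1))
    (x : ℝ) (hx : x ∈ Set.Ioo (0:ℝ) 1) :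
    HasDerivAt (fun y => (1 / w1 μ y) * deriv (fun t => f t / w0 μ t) y)
      (w2 μ x *
        (lnMu μ x *
          (deriv (fun t => f t / lnMu μ t) x *
              (1 / 2 + (x - x ^ 2) / (2 * (1 + μ)) - x) +
            deriv (deriv (fun t => f t / lnMu μ t)) x * ((x - x ^ 2) / 2)))) x := by
  have hmem : Set.Ioo (0:ℝ) 1 ∈ nhds x := isOpen_Ioo.mem_nhds hx
  set u := fun t => f t / lnMu μ t with hu
  have h2 : HasDerivAt (deriv u) (deriv (deriv u) x) x := by
    have hd : ContDiffOn ℝ 1 (deriv u) (Set.Ioo 0 1) := by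
      exact hf.deriv_of_isOpen isOpen_Ioo (by norm_num)
    exact ((hd.differentiableOn one_ne_zero).differentiableAt hmem).hasDerivAt
  have hexp : HasDerivAt (fun y : ℝ => Real.exp (y / (1+μ)))
      (Real.exp (x/(1+μ)) * (1/(1+μ))) x := by
    simpa using (((hasDerivAt_id x).div_const (1+μ)).exp)
  have hpoly : HasDerivAt (fun y : ℝ => y - y^2) (1 - 2*x) x := by
    refine ((hasDerivAt_id' x).sub ((hasDerivAt_id' x).pow 2)).congr_deriv ?_; norm_num
  have key := (hpoly.mul hexp).mul h2
  have heq : (fun y => (1 / w1 μ y) * deriv (fun t => f t / w0 μ t) y)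
      = fun y => (y - y^2) * Real.exp (y/(1+μ)) * deriv u y := by
    funext y
    have : (1 : ℝ) / w1 μ y = (y - y^2) * Real.exp (y/(1+μ)) := by
      rw [w1, one_div_div, div_eq_mul_inv, ← Real.exp_neg]
      ring_nf
    rw [this]; rfl
  rw [heq]
  refine key.congr_deriv ?_
  have hμ1 : (1:ℝ) + μ ≠ 0 := by positivity
  have hL : lnMu μ x ≠ 0 := by
    have : (1:ℝ) < 1 + μ + x := by nlinarith [hx.1]
    exact ne_of_gt (Real.log_pos this)
  simp only [w2, lnMu, Pi.mul_apply] at *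
  field_simp
  ring
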